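/- arXiv:2108.09541 — 7 statements merged into one kernel-verified Lean document; each statement's English description precedes it below -/
import Mathlib

section
/- Let n ≥ 1 and let h : ℝⁿ → ℝ be continuous and integrable. Suppose that convolution with h commutes with all rotations on test functions: for every continuous compactly supported f : ℝⁿ → ℝ, every linear isometric equivalence Q of ℝⁿ, and every x ∈ ℝⁿ, ((f ∘ Q⁻¹) ⋆ h)(x) = (f ⋆ h)(Q⁻¹ x). Then h is radially symmetric: h(Q x) = h(x) for every linear isometric equivalence Q and every x ∈ ℝⁿ. -/
open MeasureTheory

/-- Converse: if convolution with a continuous integrable kernel `h` commutes with all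
rotations on continuous compactly supported test functions, then `h` is radially
symmetric. -/
theorem radial_of_convolution_rotation_equivariant
    (n : ℕ) (hn : 1 ≤ n)
    (h : EuclideanSpace ℝ (Fin n) → ℝ)
    (hcont : Continuous h) (hint : Integrable h)
    (hequiv : ∀ f : EuclideanSpace ℝ (Fin n) → ℝ, Continuous f → HasCompactSupport f →
      ∀ (Q : EuclideanSpace ℝ (Fin n) ≃ₗᵢ[ℝ] EuclideanSpace ℝ (Fin n))
        (x : EuclideanSpace ℝ (Fin n)),
        ∫ y, f (Q.symm y) * h (x - y) = ∫ y, f y * h (Q.symm x - y)) :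
    ∀ (Q : EuclideanSpace ℝ (Fin n) ≃ₗᵢ[ℝ] EuclideanSpace ℝ (Fin n))
      (x : EuclideanSpace ℝ (Fin n)), h (Q x) = h x := by
  have key : ∀ (Q : EuclideanSpace ℝ (Fin n) ≃ₗᵢ[ℝ] EuclideanSpace ℝ (Fin n))
      (x : EuclideanSpace ℝ (Fin n)), h x = h (Q.symm x) := by
    intro Q x
    set G : EuclideanSpace ℝ (Fin n) → ℝ := fun u => h (x - Q u) - h (Q.symm x - u) with hG
    have hGcont : Continuous G := by
      rw [hG]; fun_prop
    have hGzero : ∀ u, G u = 0 := by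
      have hae : ∀ᵐ u : EuclideanSpace ℝ (Fin n), G u = 0 := by
        apply ae_eq_zero_of_integral_contDiff_smul_eq_zero
          (hGcont.locallyIntegrable (μ := volume))
        intro f hf hfsupp
        have hfc : Continuous f := hf.continuous
        have heq := hequiv f hfc hfsupp Q x
        have hcov : ∫ y, f (Q.symm y) * h (x - y) = ∫ u, f u * h (x - Q u) := by
          rw [← (Q.measurePreserving).integral_comp
            Q.toHomeomorph.measurableEmbedding (fun y => f (Q.symm y) * h (x - y))]
          simp
        rw [hcov] at heq
        have hint1 : Integrable (fun u : EuclideanSpace ℝ (Fin n) => f u * h (x - Q u)) := by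
          apply Continuous.integrable_of_hasCompactSupport
          · fun_prop
          · exact (hfsupp.mul_right)
        have hint2 : Integrable (fun u : EuclideanSpace ℝ (Fin n) => f u * h (Q.symm x - u)) := by
          apply Continuous.integrable_of_hasCompactSupport
          · fun_prop
          · exact (hfsupp.mul_right)
        have : ∫ u, f u • G u = (∫ u, f u * h (x - Q u)) - ∫ u, f u * h (Q.symm x - u) := by
          simp only [hG, smul_eq_mul, mul_sub]
          exact integral_sub hint1 hint2
        rw [this, heq, sub_self]
      have := (hGcont.ae_eq_iff_eq (volume) continuous_const).mp hae
      intro u; exact congrFun this u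
    have := hGzero 0
    simpa [hG, sub_eq_zero] using this
  intro Q x
  have := key Q (Q x)
  simpa using this
end

section
/- Let n ≥ 1, let u : ℝⁿ → ℝ be integrable and compactly supported, let R : ℝ → ℝ be measurable and bounded, and define the vector kernel field h : ℝⁿ → ℝⁿ by h(x) = R(‖x‖) • ‖x‖⁻¹ • x for x ≠ 0 and h(0) = 0. Define the scalar-to-vector convolution operator L(u)(x) = ∫ u(y) • h(x − y) dy ∈ ℝⁿ. Then L is rotation equivariant: for every linear isometric equivalence Q of ℝⁿ and every x ∈ ℝⁿ, L(u ∘ Q⁻¹)(x) = Q (L(u)(Q⁻¹ x)). -/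
open scoped Classical

open MeasureTheory

/-- Rotation equivariance of the scalar-to-vector convolution with a radially symmetric
vector kernel `h(x) = R(‖x‖) • ‖x‖⁻¹ • x`:
`L(u ∘ Q⁻¹)(x) = Q (L(u)(Q⁻¹ x))` for every linear isometric equivalence `Q`. -/
theorem scalar_vector_convolution_rotation_equivariant
    (n : ℕ) (hn : 1 ≤ n)
    (u : EuclideanSpace ℝ (Fin n) → ℝ)
    (hu : Integrable u) (husupp : HasCompactSupport u)
    (R : ℝ → ℝ) (hRmeas : Measurable R) (C : ℝ) (hRbdd : ∀ r, |R r| ≤ C)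
    (h : EuclideanSpace ℝ (Fin n) → EuclideanSpace ℝ (Fin n))
    (hdef : ∀ x, h x = if x = 0 then 0 else R ‖x‖ • ‖x‖⁻¹ • x)
    (Q : EuclideanSpace ℝ (Fin n) ≃ₗᵢ[ℝ] EuclideanSpace ℝ (Fin n))
    (x : EuclideanSpace ℝ (Fin n)) :
    ∫ y, u (Q.symm y) • h (x - y) = Q (∫ y, u y • h (Q.symm x - y)) := by
  have hC : 0 ≤ C := le_trans (abs_nonneg _) (hRbdd 0)
  have hhnorm : ∀ v, ‖h v‖ ≤ C := by
    intro v
    rw [hdef v]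
    split_ifs with hv
    · simpa using hC
    · have hvn : ‖v‖ ≠ 0 := norm_ne_zero_iff.2 hv
      rw [norm_smul, norm_smul, norm_inv, norm_norm, inv_mul_cancel₀ hvn, mul_one]
      exact (le_abs_self _).trans (le_of_eq (abs_abs _)) |>.trans (hRbdd _)
  have hhmeas : Measurable h := by
    have : h = fun x => if x = 0 then 0 else R ‖x‖ • ‖x‖⁻¹ • x := funext hdef
    rw [this]
    exact Measurable.ite (MeasurableSet.singleton 0) measurable_const
      (((hRmeas.comp measurable_norm)).smul ((measurable_norm.inv).smul measurable_id))
  have hhQ : ∀ v, h (Q v) = Q (h v) := by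
    intro v
    rw [hdef, hdef]
    by_cases hv : v = 0
    · simp [hv]
    · have hQv : Q v ≠ 0 := by
        simp [hv, Q.map_eq_zero_iff]
      rw [if_neg hQv, if_neg hv, Q.norm_map, Q.map_smul, Q.map_smul]
  -- integrability of the integrand on the right
  have hint : Integrable (fun z => u z • h (Q.symm x - z)) := by
    refine Integrable.mono' (hu.norm.const_mul C) ?_ ?_
    · exact (hu.aestronglyMeasurable.smul
        ((hhmeas.comp (measurable_const.sub measurable_id)).aestronglyMeasurable))
    · filter_upwards with z
      rw [norm_smul, mul_comm]
      exact mul_le_mul_of_nonneg_right (hhnorm _) (norm_nonneg _)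
  -- change of variables y = Q z
  have hcv : (∫ y, u (Q.symm y) • h (x - y)) = ∫ z, u z • h (x - Q z) := by
    rw [← Q.measurePreserving.integral_comp Q.toMeasurableEquiv.measurableEmbedding
      (fun y => u (Q.symm y) • h (x - y))]
    simp
  rw [hcv]
  have hxy : ∀ z : EuclideanSpace ℝ (Fin n), x - Q z = Q (Q.symm x - z) := by
    intro z
    rw [map_sub, Q.apply_symm_apply]
  calc (∫ z, u z • h (x - Q z))
      = ∫ z, Q (u z • h (Q.symm x - z)) := by
        congr 1; funext z
        rw [hxy z, hhQ, Q.map_smul]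
    _ = Q (∫ z, u z • h (Q.symm x - z)) := by
        exact (Q.toLinearIsometry.toContinuousLinearMap.integral_comp_comm hint)
end

section
/- Let n ≥ 1, let u : ℝⁿ → ℝⁿ be integrable and compactly supported, let R : ℝ → ℝ be measurable and bounded, and define the vector kernel field h : ℝⁿ → ℝⁿ by h(x) = R(‖x‖) • ‖x‖⁻¹ • x for x ≠ 0 and h(0) = 0. Define the dot-product convolution operator L(u)(x) = ∫ ⟪u(y), h(x − y)⟫ dy ∈ ℝ. Then L is rotation equivariant: for every linear isometric equivalence Q of ℝⁿ and every x ∈ ℝⁿ, L((Q ∘ u) ∘ Q⁻¹)(x) = L(u)(Q⁻¹ x). -/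
open scoped Classical InnerProductSpace
open MeasureTheory

/-- Rotation equivariance of the vector-to-scalar (dot product) convolution with a
radially symmetric vector kernel `h(x) = R(‖x‖) • ‖x‖⁻¹ • x`:
`L((Q ∘ u) ∘ Q⁻¹)(x) = L(u)(Q⁻¹ x)` for every linear isometric equivalence `Q`. -/
theorem dot_convolution_rotation_equivariant
    (n : ℕ) (hn : 1 ≤ n)
    (u : EuclideanSpace ℝ (Fin n) → EuclideanSpace ℝ (Fin n))
    (hu : Integrable u) (husupp : HasCompactSupport u)
    (R : ℝ → ℝ) (hRmeas : Measurable R) (C : ℝ) (hRbdd : ∀ r, |R r| ≤ C)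
    (h : EuclideanSpace ℝ (Fin n) → EuclideanSpace ℝ (Fin n))
    (hdef : ∀ x, h x = if x = 0 then 0 else R ‖x‖ • ‖x‖⁻¹ • x)
    (Q : EuclideanSpace ℝ (Fin n) ≃ₗᵢ[ℝ] EuclideanSpace ℝ (Fin n))
    (x : EuclideanSpace ℝ (Fin n)) :
    (∫ y, ⟪Q (u (Q.symm y)), h (x - y)⟫_ℝ) = ∫ y, ⟪u y, h (Q.symm x - y)⟫_ℝ := by
  have hQh : ∀ v, h (Q v) = Q (h v) := by
    intro v
    rw [hdef, hdef]
    by_cases hv : v = 0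
    · simp [hv]
    · rw [if_neg (by simp [hv]), if_neg hv, Q.norm_map]
      rw [_root_.map_smul, _root_.map_smul]
  have key := (Q.measurePreserving).integral_comp Q.toHomeomorph.measurableEmbedding
    (fun y => ⟪Q (u (Q.symm y)), h (x - y)⟫_ℝ)
  rw [← key]
  refine integral_congr_ae (Filter.Eventually.of_forall fun z => ?_)
  have hx : x - Q z = Q (Q.symm x - z) := by
    rw [map_sub, Q.apply_symm_apply]
  simp only [Q.symm_apply_apply, hx, hQh, Q.inner_map_map]
end

section
/- Let u : ℝ³ → ℝ³ be integrable and compactly supported, let R : ℝ → ℝ be measurable and bounded, and define the vector kernel field h : ℝ³ → ℝ³ by h(x) = R(‖x‖) • ‖x‖⁻¹ • x for x ≠ 0 and h(0) = 0. Define the cross-product convolution operator L(u)(x) = ∫ u(y) × h(x − y) dy ∈ ℝ³. Then L is equivariant under proper rotations: for every Q in the special orthogonal group SO(3) and every x ∈ ℝ³, L((Q ∘ u) ∘ Q⁻¹)(x) = Q (L(u)(Q⁻¹ x)). -/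
open scoped Classical
open MeasureTheory Matrix

/-- The cross product on Euclidean 3-space. -/
noncomputable def cross3 (a b : EuclideanSpace ℝ (Fin 3)) : EuclideanSpace ℝ (Fin 3) :=
  (WithLp.equiv 2 (Fin 3 → ℝ)).symm
    (crossProduct ((WithLp.equiv 2 (Fin 3 → ℝ)) a) ((WithLp.equiv 2 (Fin 3 → ℝ)) b))

private lemma inner_cross3 (v w z : EuclideanSpace ℝ (Fin 3)) :
    (inner ℝ (cross3 v w) z : ℝ) =
      Matrix.det ![(WithLp.equiv 2 (Fin 3 → ℝ)) z, (WithLp.equiv 2 (Fin 3 → ℝ)) v,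
        (WithLp.equiv 2 (Fin 3 → ℝ)) w] := by
  rw [← triple_product_eq_det]
  rw [PiLp.inner_apply]
  simp only [RCLike.inner_apply, starRingEnd_apply, star_trivial]
  rw [dotProduct]
  apply Finset.sum_congr rfl
  intro i _
  simp [cross3, mul_comm]

private lemma det_rows_map (Q : EuclideanSpace ℝ (Fin 3) ≃ₗᵢ[ℝ] EuclideanSpace ℝ (Fin 3))
    (hdet : LinearMap.det (Q.toLinearEquiv : EuclideanSpace ℝ (Fin 3) →ₗ[ℝ] EuclideanSpace ℝ (Fin 3)) = 1)
    (z v w : EuclideanSpace ℝ (Fin 3)) :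
    Matrix.det ![(WithLp.equiv 2 (Fin 3 → ℝ)) (Q z), (WithLp.equiv 2 (Fin 3 → ℝ)) (Q v),
        (WithLp.equiv 2 (Fin 3 → ℝ)) (Q w)] =
      Matrix.det ![(WithLp.equiv 2 (Fin 3 → ℝ)) z, (WithLp.equiv 2 (Fin 3 → ℝ)) v,
        (WithLp.equiv 2 (Fin 3 → ℝ)) w] := by
  set el := WithLp.linearEquiv 2 ℝ (Fin 3 → ℝ)
  set f : (Fin 3 → ℝ) →ₗ[ℝ] (Fin 3 → ℝ) :=
    (el : EuclideanSpace ℝ (Fin 3) →ₗ[ℝ] (Fin 3 → ℝ)) ∘ₗ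
      (Q.toLinearEquiv : EuclideanSpace ℝ (Fin 3) →ₗ[ℝ] EuclideanSpace ℝ (Fin 3)) ∘ₗ
      (el.symm : (Fin 3 → ℝ) →ₗ[ℝ] EuclideanSpace ℝ (Fin 3)) with hf
  have hdetf : LinearMap.det f = 1 := by
    rw [hf, LinearMap.det_conj, hdet]
  set M := LinearMap.toMatrix' f with hM
  have hdetM : M.det = 1 := by rw [hM, LinearMap.det_toMatrix']; exact hdetf
  have happ : ∀ a : EuclideanSpace ℝ (Fin 3),
      (WithLp.equiv 2 (Fin 3 → ℝ)) (Q a) = M *ᵥ ((WithLp.equiv 2 (Fin 3 → ℝ)) a) := by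
    intro a
    have : f ((WithLp.equiv 2 (Fin 3 → ℝ)) a) = M *ᵥ ((WithLp.equiv 2 (Fin 3 → ℝ)) a) := by
      rw [hM, ← Matrix.toLin'_apply, Matrix.toLin'_toMatrix']
    rw [← this]
    rfl
  have hmat : ![(WithLp.equiv 2 (Fin 3 → ℝ)) (Q z), (WithLp.equiv 2 (Fin 3 → ℝ)) (Q v),
      (WithLp.equiv 2 (Fin 3 → ℝ)) (Q w)] =
      Matrix.of ![(WithLp.equiv 2 (Fin 3 → ℝ)) z, (WithLp.equiv 2 (Fin 3 → ℝ)) v,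
        (WithLp.equiv 2 (Fin 3 → ℝ)) w] * Mᵀ := by
    funext i
    rw [Matrix.mul_apply_eq_vecMul, Matrix.vecMul_transpose]
    fin_cases i
    · exact happ z
    · exact happ v
    · exact happ w
  rw [hmat, Matrix.det_mul, Matrix.det_transpose, hdetM, mul_one]; rfl

private lemma cross3_map (Q : EuclideanSpace ℝ (Fin 3) ≃ₗᵢ[ℝ] EuclideanSpace ℝ (Fin 3))
    (hdet : LinearMap.det (Q.toLinearEquiv : EuclideanSpace ℝ (Fin 3) →ₗ[ℝ] EuclideanSpace ℝ (Fin 3)) = 1)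
    (a b : EuclideanSpace ℝ (Fin 3)) :
    cross3 (Q a) (Q b) = Q (cross3 a b) := by
  apply ext_inner_right ℝ
  intro c
  obtain ⟨d, rfl⟩ : ∃ d, Q d = c := ⟨Q.symm c, Q.apply_symm_apply c⟩
  rw [Q.inner_map_map, inner_cross3, inner_cross3, det_rows_map Q hdet]

/-- Equivariance under proper rotations (orthogonal maps of determinant 1) of the
cross-product convolution with a radially symmetric vector kernel
`h(x) = R(‖x‖) • ‖x‖⁻¹ • x`: `L((Q ∘ u) ∘ Q⁻¹)(x) = Q (L(u)(Q⁻¹ x))`. -/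
theorem cross_convolution_rotation_equivariant
    (u : EuclideanSpace ℝ (Fin 3) → EuclideanSpace ℝ (Fin 3))
    (hu : Integrable u) (husupp : HasCompactSupport u)
    (R : ℝ → ℝ) (hRmeas : Measurable R) (C : ℝ) (hRbdd : ∀ r, |R r| ≤ C)
    (h : EuclideanSpace ℝ (Fin 3) → EuclideanSpace ℝ (Fin 3))
    (hdef : ∀ x, h x = if x = 0 then 0 else R ‖x‖ • ‖x‖⁻¹ • x)
    (Q : EuclideanSpace ℝ (Fin 3) ≃ₗᵢ[ℝ] EuclideanSpace ℝ (Fin 3))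
    (hdet : LinearMap.det (Q.toLinearEquiv : EuclideanSpace ℝ (Fin 3) →ₗ[ℝ] EuclideanSpace ℝ (Fin 3)) = 1)
    (x : EuclideanSpace ℝ (Fin 3)) :
    (∫ y, cross3 (Q (u (Q.symm y))) (h (x - y))) =
      Q (∫ y, cross3 (u y) (h (Q.symm x - y))) := by
  have hQh : ∀ v, h (Q v) = Q (h v) := by
    intro v
    rw [hdef, hdef]
    by_cases hv : v = 0
    · simp [hv]
    · have hQv : Q v ≠ 0 := fun hc => hv (by simpa using congrArg Q.symm hc)
      rw [if_neg hQv, if_neg hv, Q.norm_map, _root_.map_smul, _root_.map_smul]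
  have hchange : (∫ y, cross3 (Q (u (Q.symm y))) (h (x - y))) =
      ∫ z, cross3 (Q (u (Q.symm (Q z)))) (h (x - Q z)) := by
    exact (Q.measurePreserving.integral_comp
      (Q.toHomeomorph.measurableEmbedding) _).symm
  rw [hchange]
  have heq : ∀ z, cross3 (Q (u (Q.symm (Q z)))) (h (x - Q z)) =
      Q (cross3 (u z) (h (Q.symm x - z))) := by
    intro z
    rw [Q.symm_apply_apply]
    have : x - Q z = Q (Q.symm x - z) := by
      rw [map_sub, Q.apply_symm_apply]
    rw [this, hQh, cross3_map Q hdet]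
  simp only [heq]
  exact Q.toLinearIsometry.integral_comp_comm _
end

section
/- Let n ≥ 1 and let h : ℝⁿ → ℝⁿ be integrable and rotation equivariant: h(Q x) = Q (h(x)) for every linear isometric equivalence Q of ℝⁿ and every x. Then the component-wise Fourier transform 𝓕h : ℝⁿ → ℂⁿ, defined by (𝓕h)ⱼ(ξ) = ∫ exp(−2πi ⟪x, ξ⟫) hⱼ(x) dx, is also rotation equivariant: both the real part and the imaginary part of 𝓕h satisfy (Re 𝓕h)(Q ξ) = Q ((Re 𝓕h)(ξ)) and (Im 𝓕h)(Q ξ) = Q ((Im 𝓕h)(ξ)) for every linear isometric equivalence Q and every ξ. -/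
open scoped InnerProductSpace
open MeasureTheory

/-- Integrability of a bounded continuous scalar weight times an integrable vector field. -/
lemma aux_integrable_smul {n : ℕ} (h : EuclideanSpace ℝ (Fin n) → EuclideanSpace ℝ (Fin n))
    (hint : Integrable h) (g : EuclideanSpace ℝ (Fin n) → ℝ) (hg : Continuous g)
    (hb : ∀ x, |g x| ≤ 1) : Integrable (fun x => g x • h x) := by
  refine (hint.norm).mono' (hg.aestronglyMeasurable.smul hint.1) ?_
  filter_upwards with x
  rw [norm_smul, Real.norm_eq_abs]
  calc |g x| * ‖h x‖ ≤ 1 * ‖h x‖ :=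
        mul_le_mul_of_nonneg_right (hb x) (norm_nonneg _)
    _ = ‖h x‖ := one_mul _

/-- Equivariance of the vector integral with a scalar weight depending on `⟪x, ξ⟫`. -/
lemma aux_equivariant {n : ℕ} (h : EuclideanSpace ℝ (Fin n) → EuclideanSpace ℝ (Fin n))
    (hequiv : ∀ (Q : EuclideanSpace ℝ (Fin n) ≃ₗᵢ[ℝ] EuclideanSpace ℝ (Fin n))
      (x : EuclideanSpace ℝ (Fin n)), h (Q x) = Q (h x))
    (g : ℝ → ℝ)
    (Q : EuclideanSpace ℝ (Fin n) ≃ₗᵢ[ℝ] EuclideanSpace ℝ (Fin n))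
    (ξ : EuclideanSpace ℝ (Fin n)) :
    ∫ x, g ⟪x, Q ξ⟫_ℝ • h x = Q (∫ x, g ⟪x, ξ⟫_ℝ • h x) := by
  have h1 : ∫ x, g ⟪x, Q ξ⟫_ℝ • h x = ∫ x, g ⟪Q x, Q ξ⟫_ℝ • h (Q x) :=
    (Q.measurePreserving.integral_comp Q.toHomeomorph.measurableEmbedding
      (fun x => g ⟪x, Q ξ⟫_ℝ • h x)).symm
  rw [h1]
  have h2 : ∀ x, g ⟪Q x, Q ξ⟫_ℝ • h (Q x) = Q.toLinearIsometry (g ⟪x, ξ⟫_ℝ • h x) := by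
    intro x
    rw [Q.inner_map_map, hequiv, Q.toLinearIsometry.map_smul]
    rfl
  simp only [h2]
  rw [Q.toLinearIsometry.integral_comp_comm]
  rfl

/-- Real and imaginary parts of the componentwise Fourier integral. -/
lemma aux_re_im {n : ℕ} (h : EuclideanSpace ℝ (Fin n) → EuclideanSpace ℝ (Fin n))
    (hint : Integrable h) (ξ : EuclideanSpace ℝ (Fin n)) (j : Fin n) :
    ((∫ x, Complex.exp (-2 * Real.pi * Complex.I * (⟪x, ξ⟫_ℝ : ℂ)) * (h x j : ℂ)).re
      = ∫ x, Real.cos (2 * Real.pi * ⟪x, ξ⟫_ℝ) * h x j) ∧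
    ((∫ x, Complex.exp (-2 * Real.pi * Complex.I * (⟪x, ξ⟫_ℝ : ℂ)) * (h x j : ℂ)).im
      = ∫ x, (-Real.sin (2 * Real.pi * ⟪x, ξ⟫_ℝ)) * h x j) := by
  have hcoord : Integrable (fun x => h x j) :=
    (EuclideanSpace.proj (𝕜 := ℝ) j).integrable_comp hint
  have hinner : Continuous fun x : EuclideanSpace ℝ (Fin n) => ⟪x, ξ⟫_ℝ :=
    continuous_id.inner continuous_const
  have hcInt : Integrable
      (fun x => Complex.exp (-2 * Real.pi * Complex.I * (⟪x, ξ⟫_ℝ : ℂ)) * (h x j : ℂ)) := by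
    refine (hcoord.norm.mono' ?_ ?_)
    · exact ((Complex.continuous_exp.comp
        ((continuous_const.mul (Complex.continuous_ofReal.comp hinner)))).aestronglyMeasurable.mul
        (Complex.continuous_ofReal.comp_aestronglyMeasurable hcoord.1))
    · filter_upwards with x
      rw [norm_mul, Complex.norm_exp]
      simp [Complex.norm_real, Real.norm_eq_abs]
  have key : ∀ x : EuclideanSpace ℝ (Fin n),
      Complex.exp (-2 * Real.pi * Complex.I * (⟪x, ξ⟫_ℝ : ℂ)) * (h x j : ℂ)
        = Complex.ofReal (Real.cos (2 * Real.pi * ⟪x, ξ⟫_ℝ) * h x j)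
          + Complex.ofReal ((-Real.sin (2 * Real.pi * ⟪x, ξ⟫_ℝ)) * h x j) * Complex.I := by
    intro x
    have e1 : (-2 * (Real.pi : ℂ) * Complex.I * (⟪x, ξ⟫_ℝ : ℂ))
        = ((-(2 * Real.pi * ⟪x, ξ⟫_ℝ) : ℝ) : ℂ) * Complex.I := by push_cast; ring
    rw [e1]
    have hre := Complex.exp_ofReal_mul_I_re (-(2 * Real.pi * ⟪x, ξ⟫_ℝ))
    have him := Complex.exp_ofReal_mul_I_im (-(2 * Real.pi * ⟪x, ξ⟫_ℝ))
    apply Complex.ext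
    · simp only [Complex.add_re, Complex.mul_re, Complex.ofReal_re, Complex.ofReal_im,
        Complex.I_re, Complex.I_im, hre, Real.cos_neg]
      ring
    · simp only [Complex.add_im, Complex.mul_im, Complex.ofReal_re, Complex.ofReal_im,
        Complex.I_re, Complex.I_im, Complex.mul_re, hre, him, Real.sin_neg, Real.cos_neg]
      ring
  constructor
  · rw [← RCLike.re_to_complex, ← integral_re hcInt]
    congr 1; funext x; rw [key x]
    simp only [RCLike.re_to_complex, Complex.add_re, Complex.mul_re, Complex.ofReal_re,
      Complex.ofReal_im, Complex.I_re, Complex.I_im]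
    ring
  · rw [← RCLike.im_to_complex, ← integral_im hcInt]
    congr 1; funext x; rw [key x]
    simp only [RCLike.im_to_complex, Complex.add_im, Complex.mul_im, Complex.ofReal_re,
      Complex.ofReal_im, Complex.I_re, Complex.I_im]
    ring

/-- The component-wise Fourier transform of an integrable rotation equivariant vector
field `h : ℝⁿ → ℝⁿ` is rotation equivariant: both the real and the imaginary parts of
`𝓕h` satisfy `(Re 𝓕h)(Q ξ) = Q ((Re 𝓕h)(ξ))` and `(Im 𝓕h)(Q ξ) = Q ((Im 𝓕h)(ξ))`. -/
theorem componentwise_fourier_rotation_equivariant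
    (n : ℕ) (hn : 1 ≤ n)
    (h : EuclideanSpace ℝ (Fin n) → EuclideanSpace ℝ (Fin n)) (hint : Integrable h)
    (hequiv : ∀ (Q : EuclideanSpace ℝ (Fin n) ≃ₗᵢ[ℝ] EuclideanSpace ℝ (Fin n))
      (x : EuclideanSpace ℝ (Fin n)), h (Q x) = Q (h x))
    (F : EuclideanSpace ℝ (Fin n) → EuclideanSpace ℂ (Fin n))
    (hF : ∀ (ξ : EuclideanSpace ℝ (Fin n)) (j : Fin n),
      F ξ j = ∫ x, Complex.exp (-2 * Real.pi * Complex.I * (⟪x, ξ⟫_ℝ : ℂ)) * (h x j : ℂ))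
    (Q : EuclideanSpace ℝ (Fin n) ≃ₗᵢ[ℝ] EuclideanSpace ℝ (Fin n))
    (ξ : EuclideanSpace ℝ (Fin n)) :
    ((WithLp.toLp 2 (fun j => (F (Q ξ) j).re) : EuclideanSpace ℝ (Fin n)) =
        Q (WithLp.toLp 2 (fun j => (F ξ j).re) : EuclideanSpace ℝ (Fin n))) ∧
      ((WithLp.toLp 2 (fun j => (F (Q ξ) j).im) : EuclideanSpace ℝ (Fin n)) =
        Q (WithLp.toLp 2 (fun j => (F ξ j).im) : EuclideanSpace ℝ (Fin n))) := by
  have hre : ∀ ζ : EuclideanSpace ℝ (Fin n),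
      (WithLp.toLp 2 (fun j => (F ζ j).re) : EuclideanSpace ℝ (Fin n))
        = ∫ x, Real.cos (2 * Real.pi * ⟪x, ζ⟫_ℝ) • h x := by
    intro ζ
    have hI : Integrable (fun x => Real.cos (2 * Real.pi * ⟪x, ζ⟫_ℝ) • h x) :=
      aux_integrable_smul h hint _ (Real.continuous_cos.comp (continuous_const.mul (continuous_id.inner continuous_const))) (fun x => Real.abs_cos_le_one _)
    ext j
    rw [PiLp.toLp_apply]
    have hc := (EuclideanSpace.proj (𝕜 := ℝ) j).integral_comp_comm hI
    rw [hF, (aux_re_im h hint ζ j).1]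
    simpa using hc
  have him : ∀ ζ : EuclideanSpace ℝ (Fin n),
      (WithLp.toLp 2 (fun j => (F ζ j).im) : EuclideanSpace ℝ (Fin n))
        = ∫ x, (-Real.sin (2 * Real.pi * ⟪x, ζ⟫_ℝ)) • h x := by
    intro ζ
    have hI : Integrable (fun x => (-Real.sin (2 * Real.pi * ⟪x, ζ⟫_ℝ)) • h x) :=
      aux_integrable_smul h hint _
        ((Real.continuous_sin.comp (continuous_const.mul
          (continuous_id.inner continuous_const))).neg)
        (fun x => by rw [abs_neg]; exact Real.abs_sin_le_one _)
    ext j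
    rw [PiLp.toLp_apply]
    have hc := (EuclideanSpace.proj (𝕜 := ℝ) j).integral_comp_comm hI
    rw [hF, (aux_re_im h hint ζ j).2]
    simpa using hc
  constructor
  · rw [hre (Q ξ), hre ξ]
    exact aux_equivariant h hequiv (fun t => Real.cos (2 * Real.pi * t)) Q ξ
  · rw [him (Q ξ), him ξ]
    exact aux_equivariant h hequiv (fun t => -Real.sin (2 * Real.pi * t)) Q ξ
end

section
/- Let n ≥ 2 and let h : ℝⁿ → ℝⁿ satisfy h(Q x) = Q (h(x)) for every orthogonal linear isometric equivalence Q of ℝⁿ and every x. Then there exists a scalar radial function R : ℝ → ℝ such that for every x ≠ 0, h(x) = R(‖x‖) • ‖x‖⁻¹ • x; moreover h(0) = 0. -/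
/-- Structure of rotation equivariant vector fields on `ℝⁿ`, `n ≥ 2`: if
`h (Q x) = Q (h x)` for every linear isometric equivalence `Q`, then `h` is radially
symmetric, i.e. `h x = R(‖x‖) • ‖x‖⁻¹ • x` for some radial function `R`, and `h 0 = 0`. -/
theorem equivariant_vector_field_is_radial
    (n : ℕ) (hn : 2 ≤ n)
    (h : EuclideanSpace ℝ (Fin n) → EuclideanSpace ℝ (Fin n))
    (hequiv : ∀ (Q : EuclideanSpace ℝ (Fin n) ≃ₗᵢ[ℝ] EuclideanSpace ℝ (Fin n))
      (x : EuclideanSpace ℝ (Fin n)), h (Q x) = Q (h x)) :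
    (∃ R : ℝ → ℝ, ∀ x : EuclideanSpace ℝ (Fin n), x ≠ 0 → h x = R ‖x‖ • ‖x‖⁻¹ • x) ∧
      h 0 = 0 := by
  have h0 : h 0 = 0 := by
    have := hequiv (LinearIsometryEquiv.neg ℝ) 0
    simp only [LinearIsometryEquiv.coe_neg, neg_zero] at this
    have h2 : h 0 + h 0 = 0 := add_eq_zero_iff_eq_neg.mpr this
    have h3 : (2 : ℝ) • h 0 = 0 := by rw [two_smul]; exact h2
    simpa using (smul_eq_zero.mp h3).resolve_left (by norm_num)
  refine ⟨?_, h0⟩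
  -- key: h x lies in the span of x
  have key : ∀ x : EuclideanSpace ℝ (Fin n), h x ∈ (ℝ ∙ x) := by
    intro x
    have hx := hequiv (Submodule.reflection (ℝ ∙ x)) x
    rw [Submodule.reflection_mem_subspace_eq_self (Submodule.mem_span_singleton_self x)] at hx
    exact (Submodule.reflection_eq_self_iff _).mp hx.symm
  set e : EuclideanSpace ℝ (Fin n) := EuclideanSpace.single (⟨0, by omega⟩ : Fin n) 1 with he
  have hene : ‖e‖ = 1 := by simp [he, EuclideanSpace.norm_single]
  refine ⟨fun t => inner ℝ (h (t • e)) e, ?_⟩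
  intro x hx
  set t := ‖x‖ with ht
  have ht0 : t ≠ 0 := norm_ne_zero_iff.mpr hx
  have hnte : ‖t • e‖ = ‖x‖ := by
    rw [norm_smul, hene, mul_one, Real.norm_eq_abs, abs_of_nonneg (norm_nonneg x)]
  set Q := Submodule.reflection (ℝ ∙ (t • e - x))ᗮ with hQ
  have hQte : Q (t • e) = x := Submodule.reflection_sub hnte
  have hmem : h (t • e) ∈ (ℝ ∙ (t • e)) := key _
  obtain ⟨c, hc⟩ := Submodule.mem_span_singleton.mp hmem
  have hc' : h (t • e) = (c * t) • e := by rw [← hc, smul_smul]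
  have hinner : (inner ℝ (h (t • e)) e : ℝ) = c * t := by
    rw [hc', real_inner_smul_left, real_inner_self_eq_norm_sq, hene]
    ring
  have hhx : h x = Q (h (t • e)) := by rw [← hQte, hequiv]
  show h x = (inner ℝ (h (t • e)) e : ℝ) • t⁻¹ • x
  rw [hinner, hhx, hc', map_smul]
  have hQe : Q e = t⁻¹ • x := by
    have : Q (t • e) = t • Q e := map_smul _ _ _
    rw [hQte] at this
    rw [this, smul_smul, inv_mul_cancel₀ ht0, one_smul]
  rw [hQe]
end

section
/- Let n ≥ 1 and let h : ℝⁿ → ℝ be bounded measurable and radially symmetric, i.e. h(Q x) = h(x) for every linear isometric equivalence Q of ℝⁿ. Then the operator L(u) = u ⋆ h on integrable scalar fields u : ℝⁿ → ℝ is a linear equivariant operator: (1) L(a • u + b • v) = a • L(u) + b • L(v) pointwise for all integrable u, v and scalars a, b; (2) L commutes with all translations: L(u(· − a))(x) = L(u)(x − a); and (3) L commutes with all rotations: L(u ∘ Q⁻¹)(x) = L(u)(Q⁻¹ x) for every linear isometric equivalence Q. -/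
open MeasureTheory

private lemma integrable_mul_kernel {n : ℕ}
    {h : EuclideanSpace ℝ (Fin n) → ℝ} (hmeas : Measurable h)
    {C : ℝ} (hbdd : ∀ x, |h x| ≤ C)
    {u : EuclideanSpace ℝ (Fin n) → ℝ} (hu : Integrable u)
    (x : EuclideanSpace ℝ (Fin n)) :
    Integrable (fun y => u y * h (x - y)) := by
  have : Integrable (fun y => h (x - y) * u y) := by
    refine hu.bdd_mul (c := C) ?_ (Filter.Eventually.of_forall fun y => hbdd _)
    exact (hmeas.comp (measurable_const.sub measurable_id)).aestronglyMeasurable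
  simpa [mul_comm] using this

/-- Convolution with a bounded measurable radially symmetric scalar kernel `h` on `ℝⁿ`
is a linear equivariant operator on integrable scalar fields: it is (1) linear,
(2) translation invariant, and (3) rotation equivariant. -/
theorem convolution_is_linear_equivariant_operator
    (n : ℕ) (hn : 1 ≤ n)
    (h : EuclideanSpace ℝ (Fin n) → ℝ)
    (hmeas : Measurable h) (C : ℝ) (hbdd : ∀ x, |h x| ≤ C)
    (hrad : ∀ (Q : EuclideanSpace ℝ (Fin n) ≃ₗᵢ[ℝ] EuclideanSpace ℝ (Fin n))
      (x : EuclideanSpace ℝ (Fin n)), h (Q x) = h x) :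
    -- (1) linearity
    (∀ u v : EuclideanSpace ℝ (Fin n) → ℝ, Integrable u → Integrable v → ∀ a b : ℝ,
      ∀ x : EuclideanSpace ℝ (Fin n),
        (∫ y, (a * u y + b * v y) * h (x - y)) =
          a * (∫ y, u y * h (x - y)) + b * ∫ y, v y * h (x - y)) ∧
    -- (2) translation invariance
    (∀ u : EuclideanSpace ℝ (Fin n) → ℝ, Integrable u →
      ∀ a x : EuclideanSpace ℝ (Fin n),
        (∫ y, u (y - a) * h (x - y)) = ∫ y, u y * h ((x - a) - y)) ∧
    -- (3) rotation equivariance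
    (∀ u : EuclideanSpace ℝ (Fin n) → ℝ, Integrable u →
      ∀ (Q : EuclideanSpace ℝ (Fin n) ≃ₗᵢ[ℝ] EuclideanSpace ℝ (Fin n))
        (x : EuclideanSpace ℝ (Fin n)),
        (∫ y, u (Q.symm y) * h (x - y)) = ∫ y, u y * h (Q.symm x - y)) := by
  refine ⟨?_, ?_, ?_⟩
  · intro u v hu hv a b x
    have hu' := integrable_mul_kernel hmeas hbdd hu x
    have hv' := integrable_mul_kernel hmeas hbdd hv x
    have : (∫ y, (a * u y + b * v y) * h (x - y)) =
        ∫ y, a * (u y * h (x - y)) + b * (v y * h (x - y)) := by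
      congr 1; ext y; ring
    rw [this, integral_add (hu'.const_mul a) (hv'.const_mul b),
      integral_const_mul, integral_const_mul]
  · intro u hu a x
    have := MeasureTheory.integral_add_right_eq_self
      (μ := (volume : Measure (EuclideanSpace ℝ (Fin n))))
      (fun y => u (y - a) * h (x - y)) a
    rw [← this]
    congr 1; ext y
    congr 2
    · abel
    · abel
  · intro u hu Q x
    have := ((Q : EuclideanSpace ℝ (Fin n) ≃ₗᵢ[ℝ] EuclideanSpace ℝ (Fin n)).measurePreserving).integral_comp
      Q.toHomeomorph.toMeasurableEquiv.measurableEmbedding (fun y => u (Q.symm y) * h (x - y))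
    rw [← this]
    congr 1; ext y
    have : Q.symm (Q y) = y := Q.symm_apply_apply y
    rw [this]
    congr 1
    rw [← hrad Q (Q.symm x - y)]
    congr 1
    simp [map_sub]
end
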